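/- arXiv:2106.05602 — 4 statements merged into one kernel-verified Lean document; each statement's English description precedes it below -/
import Mathlib

section
/- For every G : (ℕ → Bool) → ℕ there exist finitely many f₀, …, f_k ∈ 2^ℕ such that for every g ∈ 2^ℕ there is i ≤ k with g agreeing with f_i on the first G(f_i) coordinates. -/
/-- HBU for Cantor space: the cover of `2^ℕ` by basic clopen sets `[f ↾ G f]`
has a finite subcover. -/
theorem stmt_1 (G : (ℕ → Bool) → ℕ) :
    ∃ (k : ℕ) (f : Fin (k + 1) → (ℕ → Bool)),
      ∀ g : ℕ → Bool, ∃ i, ∀ m < G (f i), g m = f i m := by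
  set U : (ℕ → Bool) → Set (ℕ → Bool) := fun f => {g | ∀ m < G f, g m = f m} with hU
  have hopen : ∀ f, IsOpen (U f) := by
    intro f
    have : U f = ⋂ m ∈ Finset.range (G f), {g : ℕ → Bool | g m = f m} := by
      ext g; simp [hU]
    rw [this]
    refine isOpen_biInter_finset fun m _ => ?_
    rw [show {g : ℕ → Bool | g m = f m} = (fun g : ℕ → Bool => g m) ⁻¹' {f m} from rfl]
    exact (continuous_apply m).isOpen_preimage _ (isOpen_discrete _)
  have hcover : (Set.univ : Set (ℕ → Bool)) ⊆ ⋃ f, U f := fun g _ =>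
    Set.mem_iUnion.2 ⟨g, fun m _ => rfl⟩
  obtain ⟨t, ht⟩ := isCompact_univ.elim_finite_subcover U hopen hcover
  have htne : t.Nonempty := by
    by_contra h
    rw [Finset.not_nonempty_iff_eq_empty] at h
    subst h
    simpa using ht (Set.mem_univ (fun _ => false))
  obtain ⟨f₀, hf₀⟩ := htne
  refine ⟨t.card, fun i => if h : (i : ℕ) < t.toList.length then t.toList.get ⟨i, h⟩ else f₀, ?_⟩
  intro g
  obtain ⟨f, hft, hgf⟩ := Set.mem_iUnion₂.1 (ht (Set.mem_univ g))
  obtain ⟨j, hj⟩ := List.mem_iff_get.1 (Finset.mem_toList.2 hft)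
  have hjlt : (j : ℕ) < t.card + 1 := by
    have h1 : (j : ℕ) < t.toList.length := j.2
    have h2 := t.length_toList; omega
  refine ⟨⟨j, hjlt⟩, ?_⟩
  dsimp only
  rw [dif_pos (show ((j : ℕ)) < t.toList.length from j.2)]
  simp only [Fin.eta]
  rw [hj]; exact hgf
end

section
/- Let E ⊂ [0,1] be closed of Lebesgue measure zero, ε > 0, and (I_n) a sequence of open intervals with E ⊆ ∪_n I_n and Σ_n |I_n| < ε/2. Let Ψ : [0,1] → ℝ⁺ be continuous on [0,1]\E. Then [0,1] ⊆ (∪_{q ∈ ℚ∩[0,1], q∉E} (q − Ψ(q), q + Ψ(q))) ∪ (∪_n I_n). -/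
open MeasureTheory

/-- Key covering lemma: the rational-centered canonical intervals off `E` together
with a covering of `E` by small intervals cover all of `[0,1]`. -/
theorem stmt_12 (E : Set ℝ) (hE : E ⊆ Set.Icc 0 1) (hEc : IsClosed E)
    (hE0 : volume E = 0) (ε : ℝ) (hε : 0 < ε) (I : ℕ → ℝ × ℝ)
    (hEI : E ⊆ ⋃ n, Set.Ioo (I n).1 (I n).2)
    (hIlen : ∑' n : ℕ, ((I n).2 - (I n).1) < ε / 2)
    (Ψ : ℝ → ℝ) (hΨ : ∀ x ∈ Set.Icc (0:ℝ) 1, 0 < Ψ x)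
    (hcont : ∀ x ∈ Set.Icc (0:ℝ) 1 \ E, ContinuousWithinAt Ψ (Set.Icc 0 1) x) :
    Set.Icc (0:ℝ) 1 ⊆
      (⋃ q ∈ {q : ℚ | (q : ℝ) ∈ Set.Icc (0:ℝ) 1 \ E},
        Set.Ioo ((q : ℝ) - Ψ q) ((q : ℝ) + Ψ q)) ∪
      ⋃ n, Set.Ioo (I n).1 (I n).2 := by
  intro x hx
  by_cases hxE : x ∈ E
  · exact Or.inr (hEI hxE)
  · left
    have hΨx : 0 < Ψ x := hΨ x hx
    -- continuity: δ1
    have hc := hcont x ⟨hx, hxE⟩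
    rw [ContinuousWithinAt, Metric.tendsto_nhdsWithin_nhds] at hc
    obtain ⟨δ1, hδ1, hδ1p⟩ := hc (Ψ x / 2) (by linarith)
    -- closedness: δ2
    obtain ⟨δ2, hδ2, hδ2p⟩ := Metric.isOpen_iff.1 hEc.isOpen_compl x hxE
    set δ : ℝ := min δ1 (min δ2 (Ψ x / 2)) with hδdef
    have hδ : 0 < δ := by
      simp only [hδdef, lt_min_iff]
      exact ⟨hδ1, hδ2, by linarith⟩
    -- pick rational q in [0,1] with |x - q| < δ
    obtain ⟨q, hq01, hqd⟩ :
        ∃ q : ℚ, (q : ℝ) ∈ Set.Icc (0:ℝ) 1 ∧ |x - (q : ℝ)| < δ := by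
      rcases lt_or_eq_of_le hx.2 with hx1 | hx1
      · obtain ⟨q, hq1, hq2⟩ := exists_rat_btwn (lt_min_iff.2 ⟨lt_add_of_pos_right x hδ, hx1⟩)
        refine ⟨q, ⟨le_of_lt (lt_of_le_of_lt hx.1 hq1), le_of_lt (lt_of_lt_of_le hq2 (min_le_right _ _))⟩, ?_⟩
        rw [abs_sub_lt_iff]
        constructor <;> [linarith; linarith [lt_of_lt_of_le hq2 (min_le_left _ _)]]
      · obtain ⟨q, hq1, hq2⟩ := exists_rat_btwn
          (show max (x - δ) 0 < x by
            rw [max_lt_iff]; exact ⟨by linarith, by rw [hx1]; norm_num⟩)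
        refine ⟨q, ⟨le_of_lt (lt_of_le_of_lt (le_max_right _ _) hq1), by rw [← hx1]; exact le_of_lt hq2⟩, ?_⟩
        rw [abs_sub_lt_iff]
        constructor <;> [linarith [lt_of_le_of_lt (le_max_left _ _) hq1]; linarith]
    have hqd1 : dist (q : ℝ) x < δ1 := by
      rw [Real.dist_eq, abs_sub_comm]
      exact lt_of_lt_of_le hqd (min_le_left _ _)
    have hqd2 : dist (q : ℝ) x < δ2 :=
      lt_of_lt_of_le (by rw [Real.dist_eq, abs_sub_comm]; exact hqd)
        (le_trans (min_le_right _ _) (min_le_left _ _))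
    have hqE : (q : ℝ) ∉ E := hδ2p hqd2
    have hΨq : Ψ x / 2 < Ψ (q : ℝ) := by
      have := hδ1p hq01 hqd1
      rw [Real.dist_eq, abs_sub_lt_iff] at this
      linarith [this.1, this.2]
    have hxq : |x - (q : ℝ)| < Ψ x / 2 :=
      lt_of_lt_of_le hqd (le_trans (min_le_right _ _) (min_le_right _ _))
    rw [abs_sub_lt_iff] at hxq
    refine Set.mem_biUnion (show q ∈ {q : ℚ | (q : ℝ) ∈ Set.Icc (0:ℝ) 1 \ E} from ⟨hq01, hqE⟩) ?_
    constructor <;> linarith [hxq.1, hxq.2]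
end

section
/- Assume: (i) WHBU⁺: for every Ψ : [0,1] → ℝ⁺ there is a sequence (y_n) with [0,1] \ ∪_n (y_n − Ψ(y_n), y_n + Ψ(y_n)) countable; (ii) HBC₀: every countable collection of open intervals covering [0,1] has a finite subcollection covering [0,1]. Then HBU holds: every canonical cover ∪_{x∈[0,1]}(x − Ψ(x), x + Ψ(x)) of [0,1] has a finite subcover. -/
/-- WHBU⁺ together with HBC₀ implies HBU. -/
theorem stmt_14
    (whbu : ∀ Ψ : ℝ → ℝ, (∀ x ∈ Set.Icc (0:ℝ) 1, 0 < Ψ x) →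
      ∃ y : ℕ → ℝ, (∀ n, y n ∈ Set.Icc (0:ℝ) 1) ∧
        (Set.Icc (0:ℝ) 1 \ ⋃ n, Set.Ioo (y n - Ψ (y n)) (y n + Ψ (y n))).Countable)
    (hbc : ∀ A : Set (ℝ × ℝ), A.Countable →
      (∀ x ∈ Set.Icc (0:ℝ) 1, ∃ p ∈ A, x ∈ Set.Ioo p.1 p.2) →
      ∃ s : Finset (ℝ × ℝ), ↑s ⊆ A ∧
        ∀ x ∈ Set.Icc (0:ℝ) 1, ∃ p ∈ s, x ∈ Set.Ioo p.1 p.2) :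
    ∀ Ψ : ℝ → ℝ, (∀ x ∈ Set.Icc (0:ℝ) 1, 0 < Ψ x) →
      ∃ (k : ℕ) (y : Fin (k + 1) → ℝ), (∀ i, y i ∈ Set.Icc (0:ℝ) 1) ∧
        ∀ x ∈ Set.Icc (0:ℝ) 1, ∃ i, x ∈ Set.Ioo (y i - Ψ (y i)) (y i + Ψ (y i)) := by
  intro Ψ hΨ
  obtain ⟨y, hy, hB⟩ := whbu Ψ hΨ
  set B : Set ℝ := Set.Icc (0:ℝ) 1 \ ⋃ n, Set.Ioo (y n - Ψ (y n)) (y n + Ψ (y n)) with hBdef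
  set C : Set ℝ := B ∪ Set.range y with hCdef
  have hCsub : C ⊆ Set.Icc (0:ℝ) 1 := by
    rintro c (hc | ⟨n, rfl⟩)
    · exact hc.1
    · exact hy n
  have hCcount : C.Countable := hB.union (Set.countable_range y)
  set A : Set (ℝ × ℝ) := (fun c => (c - Ψ c, c + Ψ c)) '' C with hAdef
  have hAcount : A.Countable := hCcount.image _
  have hcover : ∀ x ∈ Set.Icc (0:ℝ) 1, ∃ p ∈ A, x ∈ Set.Ioo p.1 p.2 := by
    intro x hx
    by_cases hxB : x ∈ ⋃ n, Set.Ioo (y n - Ψ (y n)) (y n + Ψ (y n))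
    · obtain ⟨_, ⟨n, rfl⟩, hxn⟩ := hxB
      exact ⟨(y n - Ψ (y n), y n + Ψ (y n)), ⟨y n, Or.inr ⟨n, rfl⟩, rfl⟩, hxn⟩
    · refine ⟨(x - Ψ x, x + Ψ x), ⟨x, Or.inl ⟨hx, hxB⟩, rfl⟩, ?_⟩
      have := hΨ x hx
      constructor <;> simp <;> linarith
  obtain ⟨s, hsA, hs⟩ := hbc A hAcount hcover
  -- choose centers
  have hcen : ∀ p ∈ s, ∃ c ∈ C, (c - Ψ c, c + Ψ c) = p := by
    intro p hp
    obtain ⟨c, hc, hcp⟩ := hsA hp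
    exact ⟨c, hc, hcp⟩
  choose! cen hcenC hcenEq using hcen
  classical
  refine ⟨s.toList.length, fun i => if h : (i : ℕ) < s.toList.length
      then cen (s.toList.get ⟨i, h⟩) else 0, ?_, ?_⟩
  · intro i
    by_cases h : (i : ℕ) < s.toList.length
    · simp only [dif_pos h]
      exact hCsub (hcenC _ (Finset.mem_toList.mp (List.get_mem _ _)))
    · simp only [dif_neg h]
      exact ⟨le_refl 0, zero_le_one⟩
  · intro x hx
    obtain ⟨p, hp, hxp⟩ := hs x hx
    obtain ⟨j, hj⟩ := List.mem_iff_get.mp (Finset.mem_toList.mpr hp)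
    have hjlt : (j : ℕ) < s.toList.length + 1 := Nat.lt_succ_of_lt j.isLt
    refine ⟨⟨j, hjlt⟩, ?_⟩
    have h : ((⟨j, hjlt⟩ : Fin (s.toList.length + 1)) : ℕ) < s.toList.length := j.isLt
    simp only [dif_pos h]
    have : s.toList.get ⟨j, h⟩ = p := by simpa using hj
    rw [this]
    have heq := hcenEq p hp
    have h1 : cen p - Ψ (cen p) = p.1 := congrArg Prod.fst heq
    have h2 : cen p + Ψ (cen p) = p.2 := congrArg Prod.snd heq
    rw [h1, h2]
    exact hxp
end

section
/- Vitali covering theorem for countable covers: let (I_n)_{n∈ℕ} be a sequence of open intervals forming a Vitali cover of [0,1] (i.e., for every x ∈ [0,1] and every δ > 0 there is n with x ∈ I_n and |I_n| < δ). Then for every ε > 0 there exist finitely many pairwise disjoint intervals I_{n₀}, …, I_{n_k} from the sequence whose total length exceeds 1 − ε... equivalently, there is a subsequence of pairwise disjoint intervals covering [0,1] up to a set of Lebesgue measure zero. -/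
open MeasureTheory
open scoped ENNReal

private lemma stmt19_edge_null (a b : ℝ) :
    volume (Set.Icc a b \ Set.Ioo a b) = 0 := by
  refine measure_mono_null ?_ (((Set.finite_singleton b).insert a).measure_zero volume)
  rintro z ⟨hz, hz'⟩
  simp only [Set.mem_Ioo, not_and_or, not_lt] at hz'
  rcases hz' with h | h
  · exact Or.inl (le_antisymm h hz.1)
  · exact Or.inr (le_antisymm hz.2 h)

/-- Vitali covering theorem for countable Vitali covers of `[0,1]`: there are finitely
many pairwise disjoint intervals of total length exceeding `1 - ε`, and a pairwise
disjoint subsequence covering `[0,1]` up to measure zero. -/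
theorem stmt_19 (I : ℕ → ℝ × ℝ)
    (hV : ∀ x ∈ Set.Icc (0:ℝ) 1, ∀ δ > (0:ℝ), ∃ n,
      x ∈ Set.Ioo (I n).1 (I n).2 ∧ (I n).2 - (I n).1 < δ) :
    (∀ ε > (0:ℝ), ∃ (k : ℕ) (n : Fin (k + 1) → ℕ),
      (∀ i j, i ≠ j →
        Disjoint (Set.Ioo (I (n i)).1 (I (n i)).2) (Set.Ioo (I (n j)).1 (I (n j)).2)) ∧
      1 - ε < ∑ i, ((I (n i)).2 - (I (n i)).1)) ∧
    ∃ m : ℕ → ℕ,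
      (∀ i j, i ≠ j →
        Disjoint (Set.Ioo (I (m i)).1 (I (m i)).2) (Set.Ioo (I (m j)).1 (I (m j)).2)) ∧
      volume (Set.Icc (0:ℝ) 1 \ ⋃ j, Set.Ioo (I (m j)).1 (I (m j)).2) = 0 := by
  classical
  -- reserved intervals around the points (1/2)^(k+1)
  have hxmem : ∀ k : ℕ, ((1:ℝ)/2)^(k+1) ∈ Set.Icc (0:ℝ) 1 := by
    intro k
    constructor
    · positivity
    · exact pow_le_one₀ (by norm_num) (by norm_num)
  have hJex : ∀ k : ℕ, ∃ n, ((1:ℝ)/2)^(k+1) ∈ Set.Ioo (I n).1 (I n).2 ∧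
      (I n).2 - (I n).1 < ((1:ℝ)/2)^(k+4) := fun k => hV _ (hxmem k) _ (by positivity)
  choose J hJmem hJlen using hJex
  -- the enlarged disjoint hulls A k
  set A : ℕ → Set ℝ := fun k =>
    Set.Icc (((1:ℝ)/2)^(k+1) - ((1:ℝ)/2)^(k+4)) (((1:ℝ)/2)^(k+1) + ((1:ℝ)/2)^(k+4)) with hA
  have hJA : ∀ k, Set.Icc (I (J k)).1 (I (J k)).2 ⊆ A k := by
    intro k z hz
    have h1 := (hJmem k).1
    have h2 := (hJmem k).2
    have h3 := hJlen k
    exact ⟨by linarith [hz.1], by linarith [hz.2]⟩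
  have hAlt : ∀ {k l : ℕ}, k < l →
      ((1:ℝ)/2)^(l+1) + ((1:ℝ)/2)^(l+4) < ((1:ℝ)/2)^(k+1) - ((1:ℝ)/2)^(k+4) := by
    intro k l hkl
    have h1 : ((1:ℝ)/2)^(l+1) ≤ ((1:ℝ)/2)^(k+2) :=
      pow_le_pow_of_le_one (by norm_num) (by norm_num) (by omega)
    have h2 : ((1:ℝ)/2)^(l+4) ≤ ((1:ℝ)/2)^(k+5) :=
      pow_le_pow_of_le_one (by norm_num) (by norm_num) (by omega)
    have ht : (0:ℝ) < ((1:ℝ)/2)^k := by positivity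
    have e : ((1:ℝ)/2)^(k+2) + ((1:ℝ)/2)^(k+5) < ((1:ℝ)/2)^(k+1) - ((1:ℝ)/2)^(k+4) := by
      simp only [pow_add]
      nlinarith [ht]
    linarith
  have hAdis : ∀ {k l : ℕ}, k ≠ l → Disjoint (A k) (A l) := by
    have main : ∀ {k l : ℕ}, k < l → Disjoint (A k) (A l) := by
      intro k l hkl
      rw [Set.disjoint_left]
      intro z hz1 hz2
      have := hAlt hkl
      have := hz1.1
      have := hz2.2
      linarith
    intro k l hkl
    rcases lt_or_gt_of_ne hkl with h | h
    · exact main h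
    · exact (main h).symm
  -- the closed reserved set C
  set Cs : Set ℝ := {0} ∪ ⋃ k, Set.Icc (I (J k)).1 (I (J k)).2 with hCs
  have hCsub : ∀ k, Set.Icc (I (J k)).1 (I (J k)).2 ⊆ Set.Icc 0 (((1:ℝ)/2)^k) := by
    intro k z hz
    have h := hJA k hz
    have ht : (0:ℝ) < ((1:ℝ)/2)^k := by positivity
    have e1 : ((1:ℝ)/2)^(k+1) - ((1:ℝ)/2)^(k+4) ≥ 0 := by
      simp only [pow_add]; nlinarith [ht]
    have e2 : ((1:ℝ)/2)^(k+1) + ((1:ℝ)/2)^(k+4) ≤ ((1:ℝ)/2)^k := by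
      simp only [pow_add]; nlinarith [ht]
    exact ⟨by linarith [h.1], by linarith [h.2]⟩
  have hCclosed : IsClosed Cs := by
    have heq : Cs = ⋂ K : ℕ, (({0} : Set ℝ) ∪ (⋃ k ∈ Set.Iio K, Set.Icc (I (J k)).1 (I (J k)).2)
        ∪ Set.Icc 0 (((1:ℝ)/2)^K)) := by
      ext y
      simp only [hCs, Set.mem_iInter, Set.mem_union, Set.mem_iUnion, Set.mem_singleton_iff,
        Set.mem_Iio]
      constructor
      · rintro (rfl | ⟨k, hk⟩) K
        · exact Or.inl (Or.inl rfl)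
        · by_cases hkK : k < K
          · exact Or.inl (Or.inr ⟨k, hkK, hk⟩)
          · refine Or.inr ?_
            have := hCsub k hk
            refine ⟨this.1, le_trans this.2 ?_⟩
            exact pow_le_pow_of_le_one (by norm_num) (by norm_num) (by omega)
      · intro h
        have h0 := h 0
        have hy0 : 0 ≤ y := by
          rcases h0 with (rfl | ⟨k, hk, _⟩) | h0
          · exact le_rfl
          · omega
          · exact h0.1
        by_cases hy : y = 0
        · exact Or.inl hy
        · have hypos : 0 < y := lt_of_le_of_ne hy0 (Ne.symm hy)
          obtain ⟨K, hK⟩ := exists_pow_lt_of_lt_one hypos (by norm_num : ((1:ℝ)/2) < 1)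
          rcases h K with (rfl | ⟨k, _, hk⟩) | hK'
          · exact absurd rfl hy
          · exact Or.inr ⟨k, hk⟩
          · exact absurd hK' (by simp only [Set.mem_Icc, not_and, not_le]; intro _; exact hK)
    rw [heq]
    refine isClosed_iInter fun K => IsClosed.union (IsClosed.union isClosed_singleton ?_)
      isClosed_Icc
    exact (Set.finite_Iio K).isClosed_biUnion fun k _ => isClosed_Icc
  -- apply Vitali's covering theorem
  set s : Set ℝ := Set.Icc (0:ℝ) 1 \ Cs with hs
  set t : Set (ℕ × ℝ) := {p | p.2 ∈ Set.Ioo (I p.1).1 (I p.1).2 ∧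
    Disjoint (Set.Icc (I p.1).1 (I p.1).2) Cs} with htdef
  obtain ⟨u, hut, hucnt, hudisj, hucov⟩ :=
    Vitali.exists_disjoint_covering_ae (ι := ℕ × ℝ) volume s t 6
      (fun p => (I p.1).2 - (I p.1).1) (fun p => p.2)
      (fun p => Set.Icc (I p.1).1 (I p.1).2)
      (by
        intro p hp z hz
        rw [Metric.mem_closedBall]
        exact Real.dist_le_of_mem_Icc hz (Set.Ioo_subset_Icc_self hp.1))
      (by
        intro p hp
        have hL : 0 < (I p.1).2 - (I p.1).1 := by
          have := hp.1; exact sub_pos.mpr (lt_trans this.1 this.2)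
        rw [Real.volume_closedBall, Real.volume_Icc,
          show (2:ℝ) * (3 * ((I p.1).2 - (I p.1).1)) = 6 * ((I p.1).2 - (I p.1).1) by ring,
          ENNReal.ofReal_mul (by norm_num)]
        gcongr
        norm_num)
      (by
        intro p hp
        rw [interior_Icc]
        exact ⟨p.2, hp.1⟩)
      (fun p _ => isClosed_Icc)
      (by
        intro x hx ε hε
        obtain ⟨ρ, hρ, hball⟩ := Metric.isOpen_iff.mp hCclosed.isOpen_compl x hx.2
        obtain ⟨n, hn1, hn2⟩ := hV x hx.1 (min ε ρ) (lt_min hε hρ)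
        refine ⟨(n, x), ⟨hn1, ?_⟩, le_of_lt (lt_of_lt_of_le hn2 (min_le_left _ _)), rfl⟩
        rw [Set.disjoint_left]
        intro z hz hzC
        have : z ∈ Metric.ball x ρ := by
          rw [Metric.mem_ball]
          calc dist z x ≤ (I n).2 - (I n).1 :=
                Real.dist_le_of_mem_Icc hz (Set.Ioo_subset_Icc_self hn1)
            _ < min ε ρ := hn2
            _ ≤ ρ := min_le_right _ _
        exact hball this hzC)
  -- the index set S
  set S : Set ℕ := Prod.fst '' u ∪ Set.range J with hS
  have hJinC : ∀ k, Set.Icc (I (J k)).1 (I (J k)).2 ⊆ Cs := fun k =>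
    Set.subset_union_right.trans' (Set.subset_iUnion
      (fun k => Set.Icc (I (J k)).1 (I (J k)).2) k) |>.trans
      (by rw [hCs])
  have keyIcc : ∀ n₁ ∈ S, ∀ n₂ ∈ S, n₁ ≠ n₂ →
      Disjoint (Set.Icc (I n₁).1 (I n₁).2) (Set.Icc (I n₂).1 (I n₂).2) := by
    have half : ∀ p ∈ u, ∀ k : ℕ,
        Disjoint (Set.Icc (I (p.1 : ℕ)).1 (I p.1).2) (Set.Icc (I (J k)).1 (I (J k)).2) := by
      intro p hp k
      exact Disjoint.mono_right (hJinC k) (hut hp).2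
    rintro n₁ (⟨p, hp, rfl⟩ | ⟨k, rfl⟩) n₂ (⟨q, hq, rfl⟩ | ⟨l, rfl⟩) hne
    · have hpq : p ≠ q := fun h => hne (congrArg Prod.fst h)
      exact hudisj hp hq hpq
    · exact half p hp l
    · exact (half q hq k).symm
    · have hkl : k ≠ l := fun h => hne (congrArg J h)
      exact Disjoint.mono (hJA k) (hJA l) (hAdis hkl)
  have hJinj : Function.Injective J := by
    intro k l h
    by_contra hkl
    have h1 : ((1:ℝ)/2)^(k+1) ∈ Set.Icc (I (J k)).1 (I (J k)).2 :=
      Set.Ioo_subset_Icc_self (hJmem k)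
    have h2 : ((1:ℝ)/2)^(k+1) ∈ Set.Icc (I (J l)).1 (I (J l)).2 := by rw [← h]; exact h1
    exact (hAdis hkl).le_bot ⟨hJA k h1, hJA l h2⟩ |>.elim
  have hSinf : S.Infinite :=
    Set.infinite_of_injective_forall_mem hJinj fun k => Or.inr ⟨k, rfl⟩
  have hScnt : S.Countable := (hucnt.image _).union (Set.countable_range J)
  -- every interval indexed by S is nonempty
  have hSpos : ∀ n ∈ S, (I n).1 < (I n).2 := by
    rintro n (⟨p, hp, rfl⟩ | ⟨k, rfl⟩)
    · have := (hut hp).1; exact lt_trans this.1 this.2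
    · have := hJmem k; exact lt_trans this.1 this.2
  -- enumerate S
  haveI : Encodable ↥S := hScnt.toEncodable
  haveI : Infinite ↥S := hSinf.to_subtype
  haveI : Denumerable ↥S := Denumerable.ofEncodableOfInfinite ↥S
  set e : ℕ ≃ ↥S := (Denumerable.eqv ↥S).symm with he
  set m : ℕ → ℕ := fun i => ((e i : ↥S) : ℕ) with hm
  have hminj : Function.Injective m := fun i j h =>
    e.injective (Subtype.coe_injective h)
  have hmmem : ∀ i, m i ∈ S := fun i => (e i).2
  have hmsurj : ∀ n ∈ S, ∃ i, m i = n := by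
    intro n hn
    exact ⟨e.symm ⟨n, hn⟩, by simp [hm]⟩
  have hmdisj : ∀ i j, i ≠ j →
      Disjoint (Set.Ioo (I (m i)).1 (I (m i)).2) (Set.Ioo (I (m j)).1 (I (m j)).2) := by
    intro i j hij
    exact Disjoint.mono Set.Ioo_subset_Icc_self Set.Ioo_subset_Icc_self
      (keyIcc _ (hmmem i) _ (hmmem j) (fun h => hij (hminj h)))
  -- coverage up to measure zero
  have hcov : volume (Set.Icc (0:ℝ) 1 \ ⋃ j, Set.Ioo (I (m j)).1 (I (m j)).2) = 0 := by
    set U : Set ℝ := ⋃ j, Set.Ioo (I (m j)).1 (I (m j)).2 with hU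
    have hUsup : ∀ n ∈ S, Set.Ioo (I n).1 (I n).2 ⊆ U := by
      intro n hn z hz
      obtain ⟨i, rfl⟩ := hmsurj n hn
      exact Set.mem_iUnion.mpr ⟨i, hz⟩
    have hsubset : Set.Icc (0:ℝ) 1 \ U ⊆
        (s \ ⋃ a ∈ u, Set.Icc (I (a.1 : ℕ)).1 (I a.1).2) ∪
        ((⋃ a ∈ u, (Set.Icc (I (a.1 : ℕ)).1 (I a.1).2 \ Set.Ioo (I a.1).1 (I a.1).2)) ∪
         (({0} : Set ℝ) ∪
          ⋃ k, (Set.Icc (I (J k)).1 (I (J k)).2 \ Set.Ioo (I (J k)).1 (I (J k)).2))) := by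
      rintro z ⟨hz01, hzU⟩
      by_cases hzC : z ∈ Cs
      · refine Or.inr (Or.inr ?_)
        rcases hzC with hz0 | hzk
        · exact Or.inl hz0
        · obtain ⟨k, hk⟩ := Set.mem_iUnion.mp hzk
          refine Or.inr (Set.mem_iUnion.mpr ⟨k, hk, fun h => hzU ?_⟩)
          exact hUsup _ (Or.inr ⟨k, rfl⟩) h
      · by_cases hzB : z ∈ ⋃ a ∈ u, Set.Icc (I (a.1 : ℕ)).1 (I a.1).2
        · obtain ⟨a, ha, hza⟩ := Set.mem_iUnion₂.mp hzB
          refine Or.inr (Or.inl (Set.mem_iUnion₂.mpr ⟨a, ha, hza, fun h => hzU ?_⟩))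
          exact hUsup _ (Or.inl ⟨a, ha, rfl⟩) h
        · exact Or.inl ⟨⟨hz01, hzC⟩, hzB⟩
    refine measure_mono_null hsubset (measure_union_null hucov ?_)
    refine measure_union_null ?_ (measure_union_null ?_ ?_)
    · exact (measure_biUnion_null_iff hucnt).mpr fun a _ => stmt19_edge_null _ _
    · simp
    · exact measure_iUnion_null fun k => stmt19_edge_null _ _
  refine ⟨?_, m, hmdisj, hcov⟩
  -- part 1: finite families with total length > 1 - ε
  intro ε hε
  have hone : (1 : ℝ≥0∞) ≤ volume (⋃ j, Set.Ioo (I (m j)).1 (I (m j)).2) := by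
    have h1 : volume (Set.Icc (0:ℝ) 1) = 1 := by
      rw [Real.volume_Icc]; norm_num
    calc (1 : ℝ≥0∞) = volume (Set.Icc (0:ℝ) 1) := h1.symm
      _ ≤ volume ((Set.Icc (0:ℝ) 1 \ ⋃ j, Set.Ioo (I (m j)).1 (I (m j)).2) ∪
            ⋃ j, Set.Ioo (I (m j)).1 (I (m j)).2) :=
          measure_mono (Set.subset_diff_union _ _)
      _ ≤ volume (Set.Icc (0:ℝ) 1 \ ⋃ j, Set.Ioo (I (m j)).1 (I (m j)).2) +
            volume (⋃ j, Set.Ioo (I (m j)).1 (I (m j)).2) := measure_union_le _ _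
      _ = volume (⋃ j, Set.Ioo (I (m j)).1 (I (m j)).2) := by rw [hcov, zero_add]
  have hsum : volume (⋃ j, Set.Ioo (I (m j)).1 (I (m j)).2) =
      ∑' j, ENNReal.ofReal ((I (m j)).2 - (I (m j)).1) := by
    rw [measure_iUnion (fun i j hij => hmdisj i j hij) (fun j => measurableSet_Ioo)]
    simp [Real.volume_Ioo]
  have hlt : ENNReal.ofReal (1 - ε) < ∑' j, ENNReal.ofReal ((I (m j)).2 - (I (m j)).1) := by
    rw [← hsum]
    refine lt_of_lt_of_le ?_ hone
    calc ENNReal.ofReal (1 - ε) < ENNReal.ofReal 1 := by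
          rw [ENNReal.ofReal_lt_ofReal_iff (by norm_num)]; linarith
      _ = 1 := by norm_num
  rw [ENNReal.tsum_eq_iSup_sum, lt_iSup_iff] at hlt
  obtain ⟨F, hF⟩ := hlt
  obtain ⟨N, hN⟩ := F.exists_nat_subset_range
  have hFN : F ⊆ Finset.range (N + 1) :=
    hN.trans (Finset.range_subset_range.mpr (Nat.le_succ N))
  have hlt2 : ENNReal.ofReal (1 - ε) <
      ∑ j ∈ Finset.range (N + 1), ENNReal.ofReal ((I (m j)).2 - (I (m j)).1) :=
    lt_of_lt_of_le hF (Finset.sum_le_sum_of_subset hFN)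
  have hnonneg : ∀ j ∈ Finset.range (N + 1), (0:ℝ) ≤ (I (m j)).2 - (I (m j)).1 :=
    fun j _ => le_of_lt (sub_pos.mpr (hSpos _ (hmmem j)))
  rw [← ENNReal.ofReal_sum_of_nonneg hnonneg] at hlt2
  refine ⟨N, fun i => m i.val, ?_, ?_⟩
  · intro i j hij
    exact hmdisj i.val j.val (fun h => hij (Fin.val_injective h))
  · have hsum_eq : ∑ i : Fin (N + 1), ((I (m i.val)).2 - (I (m i.val)).1) =
        ∑ j ∈ Finset.range (N + 1), ((I (m j)).2 - (I (m j)).1) :=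
      Fin.sum_univ_eq_sum_range (fun j => (I (m j)).2 - (I (m j)).1) (N+1)
    rw [hsum_eq]
    rcases le_or_gt (1 - ε) 0 with h0 | h0
    · refine lt_of_le_of_lt h0 (Finset.sum_pos ?_ Finset.nonempty_range_add_one)
      intro j _
      exact sub_pos.mpr (hSpos _ (hmmem j))
    · exact (ENNReal.ofReal_lt_ofReal_iff_of_nonneg h0.le).mp hlt2
end
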